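/- arXiv:1901.05400 — 2 statements merged into one kernel-verified Lean document; each statement's English description precedes it below -/
import Mathlib

section
/- Let α > −1, β > α+1, S ≥ 0 and P > 0 satisfy (β−1−α)·P > 2S(1+α). Then there exists ε₀ ∈ (0, 1/2], depending only on α, β, S, P, such that for every ε ∈ (0, ε₀), every p > 0 with p^β ≥ P, and all m, s ∈ ℝ with −p^α·m + p^β = s and |s| ≤ S, one has −((1−ε)p)^α·((1−ε)m) + ((1−ε)p)^β < s. -/
open Real

-- A: t*(1 - t^c) ≤ c*(1-t) for t ∈ (0,1], c > 0
lemma auxA {t c : ℝ} (ht0 : 0 < t) (ht1 : t ≤ 1) (hc : 0 < c) :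
    t * (1 - t ^ c) ≤ c * (1 - t) := by
  have hA0 : 0 < t ^ c := Real.rpow_pos_of_pos ht0 c
  have hA1 : t ^ c ≤ 1 := Real.rpow_le_one ht0.le ht1 hc.le
  rcases le_or_gt 1 c with h1 | h1
  · have hb : 1 + c * (t - 1) ≤ (1 + (t - 1)) ^ c :=
      one_add_mul_self_le_rpow_one_add (by linarith) h1
    rw [show (1 : ℝ) + (t - 1) = t by ring] at hb
    nlinarith
  · have hs : (0:ℝ) ≤ t⁻¹ - 1 := by
      have h := (one_le_inv₀ ht0).mpr ht1
      linarith
    have hb : (1 + (t⁻¹ - 1)) ^ c ≤ 1 + c * (t⁻¹ - 1) :=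
      rpow_one_add_le_one_add_mul_self (by linarith) hc.le h1.le
    rw [show (1 : ℝ) + (t⁻¹ - 1) = t⁻¹ by ring, Real.inv_rpow ht0.le] at hb
    have h2 : 1 ≤ t ^ c * (1 + c * (t⁻¹ - 1)) := by
      calc (1:ℝ) = t ^ c * (t ^ c)⁻¹ := (mul_inv_cancel₀ hA0.ne').symm
        _ ≤ t ^ c * (1 + c * (t⁻¹ - 1)) := mul_le_mul_of_nonneg_left hb hA0.le
    have h3 : t * (t ^ c * (1 + c * (t⁻¹ - 1))) = t * t ^ c + c * t ^ c * (1 - t) := by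
      field_simp
    have h4 : t ≤ t * t ^ c + c * t ^ c * (1 - t) := by
      calc t = t * 1 := (mul_one t).symm
        _ ≤ t * (t ^ c * (1 + c * (t⁻¹ - 1))) := mul_le_mul_of_nonneg_left h2 ht0.le
        _ = _ := h3
    nlinarith [mul_le_mul_of_nonneg_left hA1 (mul_nonneg hc.le (by linarith : (0:ℝ) ≤ 1 - t))]

-- B: e*(1-t)*t^e ≤ 1 - t^e for t ∈ (0,1], e > 0
lemma auxB {t e : ℝ} (ht0 : 0 < t) (ht1 : t ≤ 1) (he : 0 < e) :
    e * (1 - t) * t ^ e ≤ 1 - t ^ e := by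
  have hA0 : 0 < t ^ e := Real.rpow_pos_of_pos ht0 e
  have hA1 : t ^ e ≤ 1 := Real.rpow_le_one ht0.le ht1 he.le
  rcases le_or_gt e 1 with h1 | h1
  · have hb : (1 + (t - 1)) ^ e ≤ 1 + e * (t - 1) :=
      rpow_one_add_le_one_add_mul_self (by linarith) he.le h1
    rw [show (1 : ℝ) + (t - 1) = t by ring] at hb
    nlinarith
  · have hs : (0:ℝ) ≤ t⁻¹ - 1 := by
      have h := (one_le_inv₀ ht0).mpr ht1
      linarith
    have hb : 1 + e * (t⁻¹ - 1) ≤ (1 + (t⁻¹ - 1)) ^ e :=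
      one_add_mul_self_le_rpow_one_add (by linarith) h1.le
    rw [show (1 : ℝ) + (t⁻¹ - 1) = t⁻¹ by ring, Real.inv_rpow ht0.le] at hb
    have h2 : t ^ e * (1 + e * (t⁻¹ - 1)) ≤ 1 := by
      calc t ^ e * (1 + e * (t⁻¹ - 1)) ≤ t ^ e * (t ^ e)⁻¹ :=
            mul_le_mul_of_nonneg_left hb hA0.le
        _ = 1 := mul_inv_cancel₀ hA0.ne'
    have h3 : t * (t ^ e * (1 + e * (t⁻¹ - 1))) = t * t ^ e + e * t ^ e * (1 - t) := by
      field_simp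
    have h4 : t * t ^ e + e * t ^ e * (1 - t) ≤ t := by
      calc t * t ^ e + e * t ^ e * (1 - t) = t * (t ^ e * (1 + e * (t⁻¹ - 1))) := h3.symm
        _ ≤ t * 1 := mul_le_mul_of_nonneg_left h2 ht0.le
        _ = t := mul_one t
    -- want: e*(1-t)*t^e ≤ 1 - t^e, i.e. t^e + e(1-t)t^e ≤ 1
    nlinarith [mul_pos (mul_pos he hA0) ht0, mul_nonneg (mul_nonneg he.le hA0.le) (by linarith : (0:ℝ) ≤ 1 - t)]


/-- pointwise computation showing that `(1-ε)u` is a strict subsolution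
when the gradient is large. -/
theorem statement8 (α β S P : ℝ) (hα : -1 < α) (hβ : α + 1 < β)
    (hS : 0 ≤ S) (hP : 0 < P)
    (hmain : 2 * S * (1 + α) < (β - 1 - α) * P) :
    ∃ ε₀ : ℝ, 0 < ε₀ ∧ ε₀ ≤ 1 / 2 ∧
      ∀ ε : ℝ, 0 < ε → ε < ε₀ →
      ∀ p : ℝ, 0 < p → P ≤ p ^ β →
      ∀ m s : ℝ, -(p ^ α) * m + p ^ β = s → |s| ≤ S →
        -(((1 - ε) * p) ^ α) * ((1 - ε) * m) + ((1 - ε) * p) ^ β < s := by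
  have hβ1 : (1:ℝ) ≤ β + 1 := by linarith
  have hβpos : (0:ℝ) < β + 1 := by linarith
  refine ⟨min (1/2) (1/(2*(β+1))), lt_min (by norm_num) (by positivity), min_le_left _ _,
    fun ε hε hεlt p hp hpP m s hsol hsS => ?_⟩
  have hε2 : ε < 1/2 := lt_of_lt_of_le hεlt (min_le_left _ _)
  have hεβ : ε < 1/(2*(β+1)) := lt_of_lt_of_le hεlt (min_le_right _ _)
  set t : ℝ := 1 - ε with ht_def
  have ht0 : 0 < t := by simp only [ht_def]; linarith
  have ht1 : t ≤ 1 := by simp only [ht_def]; linarith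
  have hc : 0 < α + 1 := by linarith
  have he : 0 < β - (α + 1) := by linarith
  -- rpow facts
  have hAe : 0 < t ^ (β - (α+1)) := Real.rpow_pos_of_pos ht0 _
  have hAc : 0 < t ^ (α+1) := Real.rpow_pos_of_pos ht0 _
  have hAc1 : t ^ (α+1) ≤ 1 := Real.rpow_le_one ht0.le ht1 hc.le
  have hAe1 : t ^ (β-(α+1)) ≤ 1 := Real.rpow_le_one ht0.le ht1 he.le
  have htβ : t ^ β = t ^ (α+1) * t ^ (β-(α+1)) := by
    rw [← Real.rpow_add ht0]; ring_nf
  have htβ1 : t ^ (β+1) = t ^ β * t := Real.rpow_add_one ht0.ne' β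
  have htα1 : t ^ (α+1) = t ^ α * t := Real.rpow_add_one ht0.ne' α
  -- Bernoulli bound C : 1/2 < t^(β+1)
  have hC : 1 - (β+1) * ε ≤ t ^ (β+1) := by
    have hb := one_add_mul_self_le_rpow_one_add (s := -ε) (by linarith) hβ1
    rw [show (1:ℝ) + -ε = t by rw [ht_def]; ring] at hb
    linarith
  have hChalf : (1:ℝ)/2 < t ^ (β+1) := by
    have hfe : (β+1) * (1/(2*(β+1))) = 1/2 := by field_simp
    have := mul_lt_mul_of_pos_left hεβ hβpos
    rw [hfe] at this
    linarith
  -- bounds A and B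
  have hA := auxA ht0 ht1 hc
  have hB := auxB ht0 ht1 he
  rw [show (1:ℝ) - t = ε by simp [ht_def]] at hA hB
  -- key inequality : S * (1 - t^(α+1)) < t^(α+1) * (1 - t^(β-(α+1))) * p^β
  have hPp : 0 < p ^ β := lt_of_lt_of_le hP hpP
  have hKey : S * (1 - t ^ (α+1)) < t ^ (α+1) * (1 - t ^ (β-(α+1))) * p ^ β := by
    have h1 : S * (t * (1 - t ^ (α+1))) ≤ S * ((α+1) * ε) :=
      mul_le_mul_of_nonneg_left hA hS
    have h2 : S * (α+1) * ε < (β-(α+1)) * P * t ^ (β+1) * ε := by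
      have hsc : S * (α+1) < (β-(α+1)) * P * t ^ (β+1) := by
        have hePpos : 0 < (β-(α+1)) * P := mul_pos he hP
        nlinarith
      exact mul_lt_mul_of_pos_right hsc hε
    have h3 : (β-(α+1)) * P * t ^ (β+1) * ε ≤ t * (t ^ (α+1) * (1 - t ^ (β-(α+1))) * p ^ β) := by
      calc (β-(α+1)) * P * t ^ (β+1) * ε
          = t * (t ^ (α+1) * ((β-(α+1)) * ε * t ^ (β-(α+1))) * P) := by
            rw [htβ1, htβ]; ring
        _ ≤ t * (t ^ (α+1) * (1 - t ^ (β-(α+1))) * P) := by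
            apply mul_le_mul_of_nonneg_left _ ht0.le
            apply mul_le_mul_of_nonneg_right _ hP.le
            exact mul_le_mul_of_nonneg_left hB hAc.le
        _ ≤ t * (t ^ (α+1) * (1 - t ^ (β-(α+1))) * p ^ β) := by
            apply mul_le_mul_of_nonneg_left _ ht0.le
            apply mul_le_mul_of_nonneg_left hpP
            exact mul_nonneg hAc.le (by linarith)
    have h4 : t * (S * (1 - t ^ (α+1))) < t * (t ^ (α+1) * (1 - t ^ (β-(α+1))) * p ^ β) := by
      calc t * (S * (1 - t ^ (α+1))) = S * (t * (1 - t ^ (α+1))) := by ring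
        _ ≤ S * ((α+1) * ε) := h1
        _ = S * (α+1) * ε := by ring
        _ < (β-(α+1)) * P * t ^ (β+1) * ε := h2
        _ ≤ _ := h3
    exact lt_of_mul_lt_mul_left h4 ht0.le
  -- rewrite the goal
  have hm : p ^ α * m = p ^ β - s := by linarith
  have hrw : -(((1 - ε) * p) ^ α) * ((1 - ε) * m) + ((1 - ε) * p) ^ β
      = -(t ^ (α+1)) * (p ^ β - s) + t ^ β * p ^ β := by
    rw [Real.mul_rpow ht0.le hp.le, Real.mul_rpow ht0.le hp.le, htα1]
    rw [show (1:ℝ) - ε = t by rw [ht_def], ← hm]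
    ring
  rw [hrw, htβ]
  have hsl : -S ≤ s := by
    have := abs_le.mp hsS; linarith [this.1]
  nlinarith [mul_le_mul_of_nonneg_right hsl (by linarith : (0:ℝ) ≤ 1 - t ^ (α+1))]
end

section
/- Let N ≥ 1, α > −1 and α+1 < β < α+2, and set χ := (2+α−β)/(β−1−α) > 0. Let F be a function on the N×N real symmetric matrices which is positively homogeneous of degree one, let n ∈ ℝ^N be a unit vector with F(n ⊗ n) > 0, and set C := ((χ+1)·F(n ⊗ n))^{1/(β−α−1)} / χ. Then the function w(ζ) := C·(n·ζ)^{−χ}, defined on the half-space H = {ζ ∈ ℝ^N : n·ζ > 0}, is C² on H and satisfies −‖∇w(ζ)‖^α · F(D²w(ζ)) + ‖∇w(ζ)‖^β = 0 for every ζ ∈ H. -/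
open Real

/-- `ℝ^N` with the Euclidean structure. -/
abbrev Euc (N : ℕ) := EuclideanSpace ℝ (Fin N)

/-- The Hessian matrix of `u` at `x`: entries are second directional derivatives. -/
noncomputable def hessian {N : ℕ} (u : Euc N → ℝ) (x : Euc N) : Matrix (Fin N) (Fin N) ℝ :=
  Matrix.of fun i j =>
    fderiv ℝ (fun y => fderiv ℝ u y (EuclideanSpace.single j 1)) x (EuclideanSpace.single i 1)

/-- `F` is uniformly elliptic with constants `0 < a ≤ A`. -/
def UniformlyElliptic {N : ℕ} (a A : ℝ) (F : Matrix (Fin N) (Fin N) ℝ → ℝ) : Prop :=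
  ∀ M P : Matrix (Fin N) (Fin N) ℝ, M.IsSymm → P.PosSemidef →
    a * P.trace ≤ F (M + P) - F M ∧ F (M + P) - F M ≤ A * P.trace

/-- `F` is positively homogeneous of degree one. -/
def PosHomogeneousOne {N : ℕ} (F : Matrix (Fin N) (Fin N) ℝ → ℝ) : Prop :=
  ∀ t : ℝ, 0 < t → ∀ M, F (t • M) = t * F M

section Aux
variable {N : ℕ}

lemma hasFDerivAt_pw (n : Euc N) (c p : ℝ) {ζ : Euc N} (hζ : (inner ℝ n ζ : ℝ) ≠ 0) :
    HasFDerivAt (fun ζ : Euc N => c * (inner ℝ n ζ : ℝ) ^ p)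
      ((c * (p * (inner ℝ n ζ : ℝ) ^ (p - 1))) • (innerSL ℝ n)) ζ := by
  have h1 : HasDerivAt (fun x : ℝ => c * x ^ p)
      (c * (p * (inner ℝ n ζ : ℝ) ^ (p - 1))) (inner ℝ n ζ) :=
    (Real.hasDerivAt_rpow_const (Or.inl hζ)).const_mul c
  exact h1.comp_hasFDerivAt ζ (innerSL ℝ n).hasFDerivAt

lemma gradient_w (n : Euc N) (C χ : ℝ) {ζ : Euc N} (hζ : (inner ℝ n ζ : ℝ) ≠ 0) :
    gradient (fun ζ : Euc N => C * (inner ℝ n ζ : ℝ) ^ (-χ)) ζ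
      = (C * (-χ * (inner ℝ n ζ : ℝ) ^ (-χ - 1))) • n := by
  have h := (hasFDerivAt_pw n C (-χ) hζ).hasGradientAt
  have h2 : (InnerProductSpace.toDual ℝ (Euc N)).symm
      ((C * (-χ * (inner ℝ n ζ : ℝ) ^ (-χ - 1))) • (innerSL ℝ n))
      = (C * (-χ * (inner ℝ n ζ : ℝ) ^ (-χ - 1))) • n := by
    apply (InnerProductSpace.toDual ℝ (Euc N)).injective
    rw [LinearIsometryEquiv.apply_symm_apply]
    ext v
    simp [InnerProductSpace.toDual_apply_apply, inner_smul_left]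
  rw [h2] at h
  exact h.gradient

lemma hessian_w (n : Euc N) (C χ : ℝ) {ζ : Euc N} (hζ : (0:ℝ) < (inner ℝ n ζ : ℝ)) :
    hessian (fun ζ : Euc N => C * (inner ℝ n ζ : ℝ) ^ (-χ)) ζ
      = (C * χ * (χ + 1) * (inner ℝ n ζ : ℝ) ^ (-χ - 2)) •
        (Matrix.of fun i j => n i * n j) := by
  have hopen : IsOpen {y : Euc N | 0 < (inner ℝ n y : ℝ)} :=
    isOpen_lt continuous_const (innerSL ℝ n).continuous
  ext i j
  simp only [hessian, Matrix.smul_apply, Matrix.of_apply, smul_eq_mul]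
  have heq : (fun y => fderiv ℝ (fun ζ : Euc N => C * (inner ℝ n ζ : ℝ) ^ (-χ)) y
        (EuclideanSpace.single j 1))
      =ᶠ[nhds ζ] fun y => (C * (-χ * (inner ℝ n y : ℝ) ^ (-χ - 1))) * n j := by
    filter_upwards [hopen.mem_nhds hζ] with y hy
    rw [(hasFDerivAt_pw n C (-χ) (ne_of_gt hy)).fderiv]
    simp [EuclideanSpace.inner_single_right, mul_comm]
  rw [heq.fderiv_eq]
  have h2 : HasFDerivAt (fun y : Euc N => (C * (-χ * (inner ℝ n y : ℝ) ^ (-χ - 1))) * n j)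
      ((n j * (C * (-χ)) * ((-χ - 1) * (inner ℝ n ζ : ℝ) ^ (-χ - 1 - 1))) • (innerSL ℝ n)) ζ := by
    have := hasFDerivAt_pw n (n j * (C * (-χ))) (-χ - 1) (ne_of_gt hζ)
    refine this.congr_of_eventuallyEq ?_
    filter_upwards with y
    ring
  rw [h2.fderiv]
  have hx : ((-χ : ℝ) - 1 - 1) = -χ - 2 := by ring
  simp only [ContinuousLinearMap.coe_smul', Pi.smul_apply, smul_eq_mul,
    innerSL_apply_apply, EuclideanSpace.inner_single_right, hx, RCLike.conj_to_real]
  ring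

end Aux

/-- the model boundary blow-up profile `w(ζ) = C (n·ζ)^{-χ}` solves
`-|∇w|^α F(D²w) + |∇w|^β = 0` in the half-space `{n·ζ > 0}`. -/
theorem statement13 (N : ℕ) (hN : 1 ≤ N) (α β χ : ℝ)
    (hα : -1 < α) (hβ1 : α + 1 < β) (hβ2 : β < α + 2)
    (hχ : χ = (2 + α - β) / (β - 1 - α))
    (F : Matrix (Fin N) (Fin N) ℝ → ℝ) (hFh : PosHomogeneousOne F)
    (n : Euc N) (hn : ‖n‖ = 1)
    (hFn : 0 < F (Matrix.of fun i j => n i * n j))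
    (C : ℝ) (hC : C = ((χ + 1) * F (Matrix.of fun i j => n i * n j))
        ^ (1 / (β - α - 1)) / χ) :
    ContDiffOn ℝ 2 (fun ζ : Euc N => C * (inner ℝ n ζ : ℝ) ^ (-χ))
        {ζ : Euc N | 0 < (inner ℝ n ζ : ℝ)} ∧
      ∀ ζ : Euc N, 0 < (inner ℝ n ζ : ℝ) →
        -‖gradient (fun ζ : Euc N => C * (inner ℝ n ζ : ℝ) ^ (-χ)) ζ‖ ^ α *
            F (hessian (fun ζ : Euc N => C * (inner ℝ n ζ : ℝ) ^ (-χ)) ζ) +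
          ‖gradient (fun ζ : Euc N => C * (inner ℝ n ζ : ℝ) ^ (-χ)) ζ‖ ^ β = 0 := by
  set F0 : ℝ := F (Matrix.of fun i j => n i * n j) with hF0
  have hd1 : (0:ℝ) < β - 1 - α := by linarith
  have hd2 : (0:ℝ) < 2 + α - β := by linarith
  have hχpos : 0 < χ := hχ ▸ div_pos hd2 hd1
  have hχ1 : (0:ℝ) < χ + 1 := by linarith
  have hbase : (0:ℝ) < (χ + 1) * F0 := mul_pos hχ1 hFn
  have hCpos : 0 < C := by
    rw [hC]
    exact div_pos (Real.rpow_pos_of_pos hbase _) hχpos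
  have hχ' : χ * (β - 1 - α) = 2 + α - β := by
    rw [hχ]; field_simp
  -- key coefficient identity
  have hKpow : (C * χ) ^ (β - α - 1) = (χ + 1) * F0 := by
    have : C * χ = ((χ + 1) * F0) ^ (1 / (β - α - 1)) := by
      rw [hC]; field_simp
    rw [this, ← Real.rpow_mul hbase.le, one_div,
      inv_mul_cancel₀ (by linarith : β - α - 1 ≠ 0), Real.rpow_one]
  constructor
  · intro ζ hζ
    have hζ' : (inner ℝ n ζ : ℝ) ≠ 0 := ne_of_gt hζ
    have h1 : ContDiffAt ℝ 2 (fun x : ℝ => C * x ^ (-χ)) (inner ℝ n ζ) :=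
      contDiffAt_const.mul (Real.contDiffAt_rpow_const_of_ne hζ')
    exact (h1.comp ζ ((innerSL ℝ n).contDiff.contDiffAt)).contDiffWithinAt
  · intro ζ hζ
    set t : ℝ := (inner ℝ n ζ : ℝ) with ht
    have htpos : 0 < t := hζ
    have hgrad := gradient_w n C χ (ne_of_gt hζ)
    have hnorm : ‖gradient (fun ζ : Euc N => C * (inner ℝ n ζ : ℝ) ^ (-χ)) ζ‖
        = C * χ * t ^ (-χ - 1) := by
      rw [hgrad, norm_smul, hn, mul_one, Real.norm_eq_abs]
      rw [abs_of_nonpos (by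
        show C * (-χ * t ^ (-χ - 1)) ≤ 0
        have := Real.rpow_pos_of_pos htpos (-χ - 1)
        nlinarith [mul_pos (mul_pos hCpos hχpos) this])]
      ring
    have hhess := hessian_w n C χ hζ
    have hscal : 0 < C * χ * (χ + 1) * t ^ (-χ - 2) := by
      have := Real.rpow_pos_of_pos htpos (-χ - 2)
      positivity
    have hFhess : F (hessian (fun ζ : Euc N => C * (inner ℝ n ζ : ℝ) ^ (-χ)) ζ)
        = (C * χ * (χ + 1) * t ^ (-χ - 2)) * F0 := by
      rw [hhess, hFh _ hscal]
    rw [hnorm, hFhess]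
    set K : ℝ := C * χ with hK
    have hKpos : 0 < K := mul_pos hCpos hχpos
    -- rewrite powers
    have e1 : (K * t ^ (-χ - 1)) ^ α = K ^ α * t ^ ((-χ - 1) * α) := by
      rw [Real.mul_rpow hKpos.le (Real.rpow_pos_of_pos htpos _).le,
        Real.rpow_mul htpos.le]
    have e2 : (K * t ^ (-χ - 1)) ^ β = K ^ β * t ^ ((-χ - 1) * β) := by
      rw [Real.mul_rpow hKpos.le (Real.rpow_pos_of_pos htpos _).le,
        Real.rpow_mul htpos.le]
    have hCmul : C * χ * (χ + 1) * t ^ (-χ - 2) * F0 = K * ((χ + 1) * F0) * t ^ (-χ - 2) := by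
      rw [hK]; ring
    rw [e1, e2, hCmul, ← hKpow]
    have eK : K ^ α * (K * K ^ (β - α - 1)) = K ^ β := by
      have h1 : K ^ α * (K * K ^ (β - α - 1)) = K ^ (α + (1 + (β - α - 1))) := by
        rw [Real.rpow_add hKpos, Real.rpow_add hKpos, Real.rpow_one]
      rw [h1]; congr 1; ring
    have et : t ^ ((-χ - 1) * α) * t ^ (-χ - 2) = t ^ ((-χ - 1) * β) := by
      rw [← Real.rpow_add htpos]
      congr 1
      linarith [hχ']
    calc -(K ^ α * t ^ ((-χ - 1) * α)) * (K * K ^ (β - α - 1) * t ^ (-χ - 2))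
          + K ^ β * t ^ ((-χ - 1) * β)
        = -(K ^ α * (K * K ^ (β - α - 1)) * (t ^ ((-χ - 1) * α) * t ^ (-χ - 2)))
          + K ^ β * t ^ ((-χ - 1) * β) := by ring
      _ = 0 := by rw [eK, et]; ring
end
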